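/- For every integer M ≥ 1 and all real numbers 0 = k_0 < k_1 < ⋯ < k_M, one has Σ_{j=1}^{M} (√k_j − √k_{j−1})² / (k_j − k_{j−1}) ≤ 1 + Σ_{j=1}^{M−1} (k_{j+1} − k_j)/(4 k_j). -/

import Mathlib

lemma key_ineq (a b : ℝ) (ha : 0 < a) (hab : a < b) :
    (Real.sqrt b - Real.sqrt a) ^ 2 / (b - a) ≤ (b - a) / (4 * a) := by
  have hsa := Real.sq_sqrt ha.le
  have hsb := Real.sq_sqrt (ha.trans hab).le
  have hna := Real.sqrt_nonneg a
  have hnb := Real.sqrt_nonneg b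
  have hlt : Real.sqrt a < Real.sqrt b := Real.sqrt_lt_sqrt ha.le hab
  rw [div_le_div_iff₀ (by linarith) (by linarith)]
  have hsum : 4 * a ≤ (Real.sqrt b + Real.sqrt a) ^ 2 := by
    nlinarith [mul_le_mul_of_nonneg_left hlt.le hna]
  have hbma : (Real.sqrt b - Real.sqrt a) * (Real.sqrt b + Real.sqrt a) = b - a := by
    linear_combination hsb - hsa
  calc (Real.sqrt b - Real.sqrt a) ^ 2 * (4 * a)
      ≤ (Real.sqrt b - Real.sqrt a) ^ 2 * (Real.sqrt b + Real.sqrt a) ^ 2 :=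
        mul_le_mul_of_nonneg_left hsum (sq_nonneg _)
    _ = (b - a) * (b - a) := by rw [← mul_pow, hbma, sq]

/-- For every integer `M ≥ 1` and all real numbers
`0 = k 0 < k 1 < ⋯ < k M`, one has
`∑_{j=1}^{M} (√(k j) − √(k (j−1)))² / (k j − k (j−1))
  ≤ 1 + ∑_{j=1}^{M−1} (k (j+1) − k j)/(4 k j)`. -/
theorem stmt_0 (M : ℕ) (hM : 1 ≤ M) (k : ℕ → ℝ) (hk0 : k 0 = 0)
    (hmono : ∀ j, 1 ≤ j → j ≤ M → k (j - 1) < k j) :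
    ∑ j ∈ Finset.Icc 1 M,
        (Real.sqrt (k j) - Real.sqrt (k (j - 1))) ^ 2 / (k j - k (j - 1))
      ≤ 1 + ∑ j ∈ Finset.Icc 1 (M - 1), (k (j + 1) - k j) / (4 * k j) := by
  have hpos : ∀ j, 1 ≤ j → j ≤ M → 0 < k j := by
    intro j h1 h2
    induction j with
    | zero => omega
    | succ n ih =>
      have := hmono (n + 1) (by omega) h2
      simp only [Nat.add_sub_cancel] at this
      rcases Nat.eq_zero_or_pos n with rfl | hn
      · simpa [hk0] using this
      · exact (ih hn (by omega)).trans this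
  -- split off the first term
  have hsplit : Finset.Icc 1 M = insert 1 (Finset.Icc 2 M) := by
    ext x
    simp only [Finset.mem_Icc, Finset.mem_insert]
    omega
  rw [hsplit, Finset.sum_insert (by simp)]
  have hk1 : 0 < k 1 := hpos 1 le_rfl hM
  have hfirst : (Real.sqrt (k 1) - Real.sqrt (k 0)) ^ 2 / (k 1 - k 0) = 1 := by
    rw [hk0, Real.sqrt_zero, sub_zero, sub_zero, Real.sq_sqrt hk1.le, div_self hk1.ne']
  rw [hfirst]
  gcongr
  -- reindex: Icc 2 M = (Icc 1 (M-1)).map (+1)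
  have hmap : Finset.Icc 2 M = (Finset.Icc 1 (M - 1)).image (· + 1) := by
    ext x
    simp only [Finset.mem_Icc, Finset.mem_image]
    constructor
    · intro ⟨h1, h2⟩; exact ⟨x - 1, by omega, by omega⟩
    · rintro ⟨y, ⟨h1, h2⟩, rfl⟩; omega
  rw [hmap, Finset.sum_image (by intro x _ y _ h; exact Nat.succ_injective h)]
  apply Finset.sum_le_sum
  intro j hj
  simp only [Finset.mem_Icc] at hj
  have hj1 : 1 ≤ j := hj.1
  have hjM : j + 1 ≤ M := by omega
  have h1 : 0 < k j := hpos j hj1 (by omega)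
  have h2 : k j < k (j + 1) := by
    have := hmono (j + 1) (by omega) hjM
    simpa using this
  simpa using key_ineq (k j) (k (j + 1)) h1 h2
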